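/- Let n, k ∈ ℕ, let R be a principal ideal domain, and let M = span_R{v_1,…,v_m} be an R-submodule of R^n of rank r ≤ n. Let A be the n×m matrix over R whose i-th column is v_i, and let D_r(A) be a greatest common divisor of all r×r minors of A (which is nonzero since M has rank r). If M ⊊ M_1 ⊊ M_2 ⊊ ⋯ ⊊ M_k is a strictly increasing chain of R-submodules of R^n, all having the same rank r, then k is at most the number of prime factors of D_r(A), counted with multiplicity. -/

import Mathlib

open Matrix UniqueFactorizationMonoid

/-- Submatrix of a product. -/
lemma aux_submatrix_mul {R : Type*} [CommRing R] {n m r p : ℕ}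
    (X : Matrix (Fin n) (Fin m) R) (Y : Matrix (Fin m) (Fin p) R)
    (rs : Fin r → Fin n) (cs : Fin r → Fin p) :
    (X * Y).submatrix rs cs = X.submatrix rs id * Y.submatrix id cs :=
  Matrix.submatrix_mul X Y rs id cs Function.bijective_id

/-- A baby Cauchy–Binet: if all maximal minors of `X` vanish, then `det (X * Y) = 0`. -/
lemma aux_det_mul_eq_zero {R : Type*} [CommRing R] {r m : ℕ}
    (X : Matrix (Fin r) (Fin m) R) (Y : Matrix (Fin m) (Fin r) R)
    (h : ∀ cs : Fin r → Fin m, (X.submatrix id cs).det = 0) :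
    (X * Y).det = 0 := by
  classical
  rw [← Matrix.det_transpose, Matrix.transpose_mul]
  have hrows : Yᵀ * Xᵀ = Matrix.of (fun j => ∑ c : Fin m, Y c j • Xᵀ c) := by
    ext j i
    simp [Matrix.mul_apply, Finset.sum_apply, mul_comm]
  show Matrix.detRowAlternating (Yᵀ * Xᵀ) = 0
  rw [hrows]
  have hmap := (Matrix.detRowAlternating :
      (Fin r → R) [⋀^Fin r]→ₗ[R] R).toMultilinearMap.map_sum
      (g := fun j (c : Fin m) => Y c j • Xᵀ c)
  simp only [AlternatingMap.coe_multilinearMap] at hmap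
  rw [show (Matrix.of (fun j => ∑ c : Fin m, Y c j • Xᵀ c) : Matrix (Fin r) (Fin r) R)
      = fun j => ∑ c : Fin m, Y c j • Xᵀ c from rfl, hmap]
  refine Finset.sum_eq_zero fun p _ => ?_
  have := (Matrix.detRowAlternating :
      (Fin r → R) [⋀^Fin r]→ₗ[R] R).toMultilinearMap.map_smul_univ
      (fun j => Y (p j) j) (fun j => Xᵀ (p j))
  simp only [AlternatingMap.coe_multilinearMap] at this
  rw [this]
  have hsub : Matrix.detRowAlternating (fun j => Xᵀ (p j)) = ((X.submatrix id p)ᵀ).det := by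
    congr 1
  rw [hsub, Matrix.det_transpose, h p, smul_zero]

/-- Counting lemma: if a product of `s.card` non-units divides a nonzero `x`,
then `s.card` is at most the number of prime factors of `x`. -/
lemma aux_card_le {R : Type*} [CommRing R] [IsDomain R] [IsPrincipalIdealRing R]
    (t : ℕ → R) (s : Finset ℕ) :
    ∀ (x : R), x ≠ 0 → (∏ i ∈ s, t i) ∣ x → (∀ i ∈ s, ¬ IsUnit (t i)) →
      s.card ≤ Multiset.card (factors x) := by
  classical
  letI : StrongNormalizationMonoid R := UniqueFactorizationMonoid.strongNormalizationMonoid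
  have hcard : ∀ x : R, Multiset.card (factors x) = Multiset.card (normalizedFactors x) := by
    intro x
    rw [normalizedFactors, Multiset.card_map]
  induction s using Finset.induction_on with
  | empty => simp
  | @insert a s ha ih =>
    intro x hx hdvd hu
    obtain ⟨w, hw⟩ := hdvd
    rw [Finset.prod_insert ha] at hw
    set y := (∏ i ∈ s, t i) * w with hy
    have hxy : x = t a * y := by rw [hw, hy]; ring
    have hta : t a ≠ 0 := by rintro h; rw [h, zero_mul] at hxy; exact hx hxy
    have hyne : y ≠ 0 := by rintro h; rw [h, mul_zero] at hxy; exact hx hxy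
    have hcnt : Multiset.card (normalizedFactors x)
        = Multiset.card (normalizedFactors (t a)) + Multiset.card (normalizedFactors y) := by
      rw [hxy, normalizedFactors_mul hta hyne, Multiset.card_add]
    have h1 : 1 ≤ Multiset.card (normalizedFactors (t a)) := by
      by_contra hc
      have h0 : normalizedFactors (t a) = 0 := by
        rw [← Multiset.card_eq_zero]; omega
      have := prod_normalizedFactors hta
      rw [h0, Multiset.prod_zero] at this
      exact hu a (Finset.mem_insert_self a s) (this.isUnit isUnit_one)
    have hih := ih y hyne ⟨w, hy⟩ (fun i hi => hu i (Finset.mem_insert_of_mem hi))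
    rw [Finset.card_insert_of_notMem ha, hcard] at *
    omega

/-- Over a field, a matrix with linearly independent columns has a nonzero maximal minor. -/
lemma aux_exists_minor_field {K : Type*} [Field K] {n r : ℕ}
    (B : Matrix (Fin n) (Fin r) K)
    (h : LinearIndependent K (fun l => (fun x => B x l))) :
    ∃ rs : Fin r → Fin n, (B.submatrix rs id).det ≠ 0 := by
  classical
  have hBt : (fun l => (fun x => B x l)) = Bᵀ := rfl
  have hrank : B.rank = r := by
    rw [Matrix.rank_eq_finrank_span_cols, show B.col = (fun l => (fun x => B x l)) from rfl, finrank_span_eq_card h, Fintype.card_fin]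
  have hrows : Module.finrank K (Submodule.span K (Set.range B)) = r := by
    have h1 : Bᵀ.rank = r := by rw [Matrix.rank_transpose]; exact hrank
    rw [Matrix.rank_eq_finrank_span_cols] at h1
    exact h1
  have htop : Submodule.span K (Set.range B) = ⊤ := by
    apply Submodule.eq_top_of_finrank_eq
    rw [hrows, Module.finrank_fin_fun]
  obtain ⟨tset, hsub, hspan, hind⟩ := exists_linearIndependent K (Set.range B)
  rw [htop] at hspan
  have htfin : tset.Finite := (Set.finite_range B).subset hsub
  letI := htfin.fintype
  have hbasis : Module.Basis tset K (Fin r → K) :=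
    Module.Basis.mk hind (by rw [Subtype.range_coe, hspan])
  have hcardt : Fintype.card tset = r := by
    rw [← Module.finrank_eq_card_basis hbasis, Module.finrank_fin_fun]
  have e : Fin r ≃ tset := (Fintype.equivFinOfCardEq hcardt).symm
  have hmem : ∀ l : Fin r, ((e l : Fin r → K)) ∈ Set.range B := fun l => hsub (e l).2
  choose rs hrs using hmem
  refine ⟨rs, ?_⟩
  have hrowind : LinearIndependent K (fun l => (B.submatrix rs id) l) := by
    have : (fun l => (B.submatrix rs id) l) = fun l => ((e l : tset) : Fin r → K) := by
      funext l
      ext j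
      rw [← hrs l]
      rfl
    rw [this]
    exact hind.comp e e.injective
  have hu : IsUnit (B.submatrix rs id) :=
    (Matrix.linearIndependent_rows_iff_isUnit).1 hrowind
  exact ((Matrix.isUnit_iff_isUnit_det _).1 hu).ne_zero

/-- Over a domain, a matrix with linearly independent columns has a nonzero maximal minor. -/
lemma aux_exists_minor {R : Type*} [CommRing R] [IsDomain R] {n r : ℕ}
    (B : Matrix (Fin n) (Fin r) R)
    (h : LinearIndependent R (fun l => (fun x => B x l))) :
    ∃ rs : Fin r → Fin n, (B.submatrix rs id).det ≠ 0 := by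
  classical
  let K := FractionRing R
  have hinj : Function.Injective (algebraMap R K) := IsFractionRing.injective R K
  let g : (Fin n → R) →ₗ[R] (Fin n → K) := LinearMap.compLeft (Algebra.linearMap R K) (Fin n)
  have hginj : Function.Injective g := by
    intro x y hxy
    funext i
    exact hinj (congrFun hxy i)
  have h1 : LinearIndependent R (g ∘ fun l => (fun x => B x l)) :=
    h.map' g (LinearMap.ker_eq_bot.2 hginj)
  have h2 : LinearIndependent K (fun l => (fun x => (B.map (algebraMap R K)) x l)) := by
    have heq : (g ∘ fun l => (fun x => B x l))
        = fun l => (fun x => (B.map (algebraMap R K)) x l) := rfl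
    rw [heq] at h1
    exact (LinearIndependent.iff_fractionRing R K).1 h1
  obtain ⟨rs, hrs⟩ := aux_exists_minor_field (B.map (algebraMap R K)) h2
  refine ⟨rs, fun hc => hrs ?_⟩
  rw [Matrix.submatrix_map, ← RingHom.mapMatrix_apply, ← RingHom.map_det, hc, map_zero]

/-- Let `R` be a PID, `M = span_R {v 0, …, v (m-1)}` a submodule of
`R^n` of rank `r ≤ n`, `A` the `n × m` matrix whose columns are the generators `v i`,
and `D` a gcd of all `r × r` minors of `A`.  For any strictly increasing chain
`M ⊊ M 1 ⊊ ⋯ ⊊ M k` of `R`-submodules of `R^n` all of rank `r`, `k` is at most the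
number of prime factors of `D`, counted with multiplicity. -/
theorem chain_length_le_prime_factors
    {R : Type*} [CommRing R] [IsDomain R] [IsPrincipalIdealRing R]
    (n m k r : ℕ) (hrn : r ≤ n)
    (v : Fin m → (Fin n → R))
    (A : Matrix (Fin n) (Fin m) R) (hA : ∀ i j, A i j = v j i)
    (D : R)
    (hDdvd : ∀ (rs : Fin r → Fin n) (cs : Fin r → Fin m),
      D ∣ (A.submatrix rs cs).det)
    (hDgcd : ∀ d : R,
      (∀ (rs : Fin r → Fin n) (cs : Fin r → Fin m), d ∣ (A.submatrix rs cs).det) →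
      d ∣ D)
    (M : ℕ → Submodule R (Fin n → R))
    (hM0 : M 0 = Submodule.span R (Set.range v))
    (hchain : ∀ i < k, M i < M (i + 1))
    (hrank : ∀ i ≤ k, Module.finrank R (M i) = r) :
    k ≤ Multiset.card (UniqueFactorizationMonoid.factors D) := by
  classical
  letI : StrongNormalizationMonoid R := UniqueFactorizationMonoid.strongNormalizationMonoid
  letI : NormalizedGCDMonoid R := UniqueFactorizationMonoid.toNormalizedGCDMonoid R
  -- normalize the chain so that all indices are meaningful
  set M' : ℕ → Submodule R (Fin n → R) := fun i => M (min i k) with hM'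
  have hrank' : ∀ i, Module.finrank R (M' i) = r := fun i => hrank _ (min_le_right _ _)
  have hchain' : ∀ i < k, M' i < M' (i + 1) := by
    intro i hi
    have h1 : min i k = i := min_eq_left hi.le
    have h2 : min (i + 1) k = i + 1 := min_eq_left hi
    simp only [hM', h1, h2]
    exact hchain i hi
  have hM0' : M' 0 = Submodule.span R (Set.range v) := by
    simp only [hM', Nat.min_eq_left (Nat.zero_le k), hM0]
  -- a basis of each module in the chain
  have hbex : ∀ i, Nonempty (Module.Basis (Fin r) R (M' i)) := by
    intro i
    obtain ⟨s, bb⟩ := Submodule.basisOfPid (Pi.basisFun R (Fin n)) (M' i)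
    have hs : s = r := by
      rw [← hrank' i, Module.finrank_eq_card_basis bb, Fintype.card_fin]
    exact ⟨bb.reindex (finCongr hs)⟩
  have b : ∀ i, Module.Basis (Fin r) R (M' i) := fun i => (hbex i).some
  -- the matrices of the bases, and the gcd's of their maximal minors
  set B : ℕ → Matrix (Fin n) (Fin r) R :=
    fun i => Matrix.of (fun x l => ((b i l : Fin n → R) x)) with hB
  set d : ℕ → R := fun i =>
    Finset.gcd Finset.univ (fun rs : Fin r → Fin n => ((B i).submatrix rs id).det) with hd
  -- expressing elements in a basis
  have hrepr : ∀ i (x : M' i),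
      (x : Fin n → R) = ∑ l, ((b i).repr x l) • ((b i l : Fin n → R)) := by
    intro i x
    conv_lhs => rw [← (b i).sum_repr x]
    push_cast
    rfl
  -- columns of `B i` belong to `M' i`
  have hcol : ∀ i l, (fun x => B i x l) ∈ M' i := by
    intro i l
    have : (fun x => B i x l) = ((b i l : Fin n → R)) := rfl
    rw [this]
    exact (b i l).2
  -- Step B : the chain step
  have hstep : ∀ i < k, ∃ tt : R, ¬ IsUnit tt ∧ d (i + 1) * tt ∣ d i := by
    intro i hi
    have hle : M' i ≤ M' (i + 1) := (hchain' i hi).le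
    set T : Matrix (Fin r) (Fin r) R :=
      Matrix.of (fun j l => (b (i + 1)).repr ⟨(b i l : Fin n → R), hle (b i l).2⟩ j) with hT
    have hBT : B i = B (i + 1) * T := by
      ext x l
      rw [Matrix.mul_apply]
      have hx := hrepr (i + 1) ⟨(b i l : Fin n → R), hle (b i l).2⟩
      calc B i x l = ((b i l : Fin n → R)) x := rfl
        _ = (∑ j, ((b (i+1)).repr ⟨(b i l : Fin n → R), hle (b i l).2⟩ j)
              • ((b (i+1) j : Fin n → R))) x := by rw [← hx]
        _ = ∑ j, B (i+1) x j * T j l := by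
            rw [Finset.sum_apply]
            refine Finset.sum_congr rfl fun j _ => ?_
            simp only [Pi.smul_apply, smul_eq_mul, hT, hB, Matrix.of_apply]
            ring
    refine ⟨T.det, ?_, ?_⟩
    · intro hunit
      have hTu : IsUnit T := (Matrix.isUnit_iff_isUnit_det T).2 hunit
      obtain ⟨U, hU⟩ := hTu
      have hB1 : B (i + 1) = B i * (↑U⁻¹ : Matrix (Fin r) (Fin r) R) := by
        rw [hBT, ← hU, Matrix.mul_assoc]
        simp
      have hbmem : ∀ j, ((b (i + 1) j : Fin n → R)) ∈ M' i := by
        intro j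
        have hcoleq : ((b (i + 1) j : Fin n → R))
            = ∑ l : Fin r, ((↑U⁻¹ : Matrix (Fin r) (Fin r) R) l j) • ((b i l : Fin n → R)) := by
          funext x
          have : ((b (i + 1) j : Fin n → R)) x = B (i + 1) x j := rfl
          rw [this, hB1, Matrix.mul_apply, Finset.sum_apply]
          refine Finset.sum_congr rfl fun l _ => ?_
          simp only [Pi.smul_apply, smul_eq_mul]
          have hBil : B i x l = ((b i l : Fin n → R)) x := rfl
          rw [hBil, mul_comm]
        rw [hcoleq]
        exact Submodule.sum_mem _ fun l _ => Submodule.smul_mem _ _ (b i l).2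
      have hle2 : M' (i + 1) ≤ M' i := by
        intro x hx
        have hx2 := hrepr (i + 1) ⟨x, hx⟩
        have : x = ∑ l, ((b (i+1)).repr ⟨x, hx⟩ l) • ((b (i+1) l : Fin n → R)) := hx2
        rw [this]
        exact Submodule.sum_mem _ fun l _ => Submodule.smul_mem _ _ (hbmem l)
      exact absurd hle2 (not_le_of_gt (hchain' i hi))
    · apply Finset.dvd_gcd
      intro rs _
      rw [hBT, aux_submatrix_mul, Matrix.submatrix_id_id, Matrix.det_mul]
      exact mul_dvd_mul (Finset.gcd_dvd (Finset.mem_univ rs)) dvd_rfl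
  -- Step A : `d 0 ∣ D`
  have hvmem : ∀ j, v j ∈ M' 0 := fun j => hM0' ▸ Submodule.subset_span ⟨j, rfl⟩
  set C : Matrix (Fin r) (Fin m) R :=
    Matrix.of (fun l j => (b 0).repr ⟨v j, hvmem j⟩ l) with hC
  have hAC : A = B 0 * C := by
    ext x j
    rw [Matrix.mul_apply, hA x j]
    have hx := hrepr 0 ⟨v j, hvmem j⟩
    calc v j x = ((⟨v j, hvmem j⟩ : M' 0) : Fin n → R) x := rfl
      _ = (∑ l, ((b 0).repr ⟨v j, hvmem j⟩ l) • ((b 0 l : Fin n → R))) x := by rw [← hx]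
      _ = ∑ l, B 0 x l * C l j := by
          rw [Finset.sum_apply]
          refine Finset.sum_congr rfl fun l _ => ?_
          simp only [Pi.smul_apply, smul_eq_mul, hC, hB, Matrix.of_apply]
          ring
  have hd0D : d 0 ∣ D := by
    apply hDgcd
    intro rs cs
    rw [hAC, aux_submatrix_mul, Matrix.det_mul]
    exact Dvd.dvd.mul_right (Finset.gcd_dvd (Finset.mem_univ rs)) _
  -- `D ≠ 0`
  have hBind : LinearIndependent R (fun l => (fun x => B 0 x l)) := by
    have : (fun l => (fun x => B 0 x l)) = ((M' 0).subtype ∘ (b 0)) := rfl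
    rw [this]
    exact (b 0).linearIndependent.map' _ (Submodule.ker_subtype _)
  obtain ⟨rs₀, hrs₀⟩ := aux_exists_minor (B 0) hBind
  have hbspan : ∀ l, ((b 0 l : Fin n → R)) ∈ Submodule.span R (Set.range v) := by
    intro l
    rw [← hM0']
    exact (b 0 l).2
  have hcoeff : ∀ l, ∃ c : Fin m → R, ∑ j, c j • v j = ((b 0 l : Fin n → R)) :=
    fun l => (Finsupp.mem_span_range_iff_exists_finsupp.1 (hbspan l)).elim
      (fun c hc => ⟨c, by rw [← hc]; simp [Finsupp.sum_fintype]⟩)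
  choose c hc using hcoeff
  set C₂ : Matrix (Fin m) (Fin r) R := Matrix.of (fun j l => c l j) with hC₂
  have hB0 : (B 0).submatrix rs₀ id = (A.submatrix rs₀ id) * C₂ := by
    ext x l
    rw [Matrix.mul_apply]
    calc (B 0).submatrix rs₀ id x l = ((b 0 l : Fin n → R)) (rs₀ x) := rfl
      _ = (∑ j, c l j • v j) (rs₀ x) := by rw [hc l]
      _ = ∑ j, A.submatrix rs₀ id x j * C₂ j l := by
          rw [Finset.sum_apply]
          refine Finset.sum_congr rfl fun j _ => ?_
          simp only [Pi.smul_apply, smul_eq_mul, Matrix.submatrix_apply, hC₂,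
            Matrix.of_apply, hA, id_eq]
          ring
  have hDne : D ≠ 0 := by
    intro h0
    have hall : ∀ rs cs, (A.submatrix rs cs).det = 0 := fun rs cs =>
      zero_dvd_iff.1 (h0 ▸ hDdvd rs cs)
    have hz := aux_det_mul_eq_zero (A.submatrix rs₀ id) C₂ (fun cs => by
      have hsub : (A.submatrix rs₀ id).submatrix id cs = A.submatrix rs₀ cs := by
        rw [Matrix.submatrix_submatrix]
        simp
      rw [hsub]
      exact hall rs₀ cs)
    rw [← hB0] at hz
    exact hrs₀ hz
  -- assemble the chain of divisibilities
  choose tfun htu htdvd using hstep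
  set t' : ℕ → R := fun i => if hi : i < k then tfun i hi else 1 with ht'
  have key : ∀ p j, j + p = k → (∏ i ∈ Finset.Ico j k, t' i) ∣ d j := by
    intro p
    induction p with
    | zero =>
      intro j hj
      rw [Nat.add_zero] at hj
      subst hj
      simp
    | succ p ih =>
      intro j hj
      have hjk : j < k := by omega
      rw [Finset.prod_eq_prod_Ico_succ_bot hjk t']
      have h1 : t' j * (∏ i ∈ Finset.Ico (j+1) k, t' i) ∣ t' j * d (j+1) :=
        mul_dvd_mul_left _ (ih (j+1) (by omega))
      have ht'j : t' j = tfun j hjk := dif_pos hjk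
      have h2 : t' j * d (j+1) ∣ d j := by
        rw [ht'j, mul_comm]
        exact htdvd j hjk
      exact dvd_trans h1 h2
  have hprod : (∏ i ∈ Finset.range k, t' i) ∣ D := by
    have hkey := key k 0 (Nat.zero_add k)
    rw [← Finset.range_eq_Ico] at hkey
    exact hkey.trans hd0D
  have hfin := aux_card_le t' (Finset.range k) D hDne hprod (fun i hi => by
    have hik : i < k := Finset.mem_range.1 hi
    have ht'i : t' i = tfun i hik := dif_pos hik
    rw [ht'i]
    exact htu i hik)
  simpa using hfin
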